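/- For any odd k > 3, the minion Pol(C_k, K_3) does not have bounded essential arity: for every n there is an n-ary polymorphism f: C_k^n → K_3 all of whose n coordinates are essential. Concretely, fixing a homomorphism h: C_k → K_3 with h(0)=h(2)=0 and h(1)=1, the function f(x_1,...,x_n) = 2 if x_1=...=x_n=1 and f(x_1,...,x_n) = h(x_1) otherwise, is a polymorphism from C_k to K_3 in which every coordinate is essential. -/
import Mathlib


/-- Adjacency in the `m`-cycle on vertex set `ZMod m`. -/
def CycAdj (m : ℕ) (u v : ZMod m) : Prop := v = u + 1 ∨ v = u - 1

/-- A coordinate `i` of a function on `n`-tuples is essential if changing only the `i`-th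
argument can change the value. -/
def Essential {A B : Type*} {n : ℕ} (f : (Fin n → A) → B) (i : Fin n) : Prop :=
  ∃ a b, f a ≠ f (Function.update a i b)

/-- Explicit homomorphism from `C_k` to `K_3`. -/
noncomputable def hAux (k : ℕ) : ZMod k → ZMod 3 :=
  fun u => if u.val = k - 1 then 2 else ((u.val % 2 : ℕ) : ZMod 3)

lemma hAux_step (k : ℕ) (hkodd : Odd k) (hk : 3 < k) (u : ZMod k) :
    hAux k u ≠ hAux k (u + 1) := by
  haveI : NeZero k := ⟨by omega⟩
  haveI : Fact (1 < k) := ⟨by omega⟩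
  have ha : u.val < k := ZMod.val_lt u
  have hv : (u + 1).val = (u.val + 1) % k := by
    rw [ZMod.val_add, ZMod.val_one]
  unfold hAux
  rcases Nat.lt_or_ge u.val (k - 1) with hlt | hge
  · have hv' : (u + 1).val = u.val + 1 := by
      rw [hv, Nat.mod_eq_of_lt (by omega)]
    rw [hv', if_neg (by omega)]
    by_cases h2 : u.val + 1 = k - 1
    · rw [if_pos h2]
      obtain ⟨m, hm⟩ := hkodd
      have : u.val % 2 = 1 := by omega
      rw [this]; decide
    · rw [if_neg h2]
      rcases Nat.mod_two_eq_zero_or_one u.val with h0 | h0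
      · have h1 : (u.val + 1) % 2 = 1 := by omega
        rw [h0, h1]; decide
      · have h1 : (u.val + 1) % 2 = 0 := by omega
        rw [h0, h1]; decide
  · have heq : u.val = k - 1 := by omega
    have hv' : (u + 1).val = 0 := by
      rw [hv, heq]
      have : k - 1 + 1 = k := by omega
      rw [this, Nat.mod_self]
    rw [if_pos heq, hv', if_neg (by omega)]
    decide

lemma hAux_hom (k : ℕ) (hkodd : Odd k) (hk : 3 < k) :
    ∀ u v, CycAdj k u v → hAux k u ≠ hAux k v := by
  intro u v huv
  rcases huv with h | h
  · rw [h]; exact hAux_step k hkodd hk u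
  · have : u = v + 1 := by rw [h]; ring
    rw [this]; exact (hAux_step k hkodd hk v).symm

open Classical in
/-- For odd `k > 3`, the minion `Pol(C_k, K_3)` does not have bounded essential arity:
there is a homomorphism `h : C_k → K_3` with `h 0 = h 2 = 0`, `h 1 = 1`, and for any such
`h` and any `n ≥ 1`, the function `f(x) = 2` if `x₁ = ⋯ = xₙ = 1`, and `f(x) = h(x₁)`
otherwise, is an `n`-ary polymorphism from `C_k` to `K_3` (the complete graph on `ZMod 3`)
in which every coordinate is essential. -/
theorem pol_cycle_K3_unbounded_essential_arity (k : ℕ) (hkodd : Odd k) (hk : 3 < k)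
    (n : ℕ) (hn : 0 < n) :
    (∃ h : ZMod k → ZMod 3,
      (∀ u v, CycAdj k u v → h u ≠ h v) ∧ h 0 = 0 ∧ h 1 = 1 ∧ h 2 = 0) ∧
    (∀ h : ZMod k → ZMod 3, (∀ u v, CycAdj k u v → h u ≠ h v) →
      h 0 = 0 → h 1 = 1 → h 2 = 0 →
      ((∀ x y : Fin n → ZMod k, (∀ i, CycAdj k (x i) (y i)) →
          (if ∀ i, x i = 1 then (2 : ZMod 3) else h (x ⟨0, hn⟩)) ≠
          (if ∀ i, y i = 1 then (2 : ZMod 3) else h (y ⟨0, hn⟩))) ∧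
        (∀ i : Fin n,
          Essential (fun x : Fin n → ZMod k =>
            if ∀ j, x j = 1 then (2 : ZMod 3) else h (x ⟨0, hn⟩)) i))) := by
  haveI : NeZero k := ⟨by omega⟩
  haveI : Fact (1 < k) := ⟨by omega⟩
  have h1ne0 : (1 : ZMod k) ≠ 0 := one_ne_zero
  have h1ne2 : (1 : ZMod k) ≠ 2 := by
    intro h
    exact h1ne0 (by linear_combination -h)
  constructor
  · refine ⟨hAux k, hAux_hom k hkodd hk, ?_, ?_, ?_⟩
    · unfold hAux
      rw [ZMod.val_zero, if_neg (by omega)]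
      norm_num
    · unfold hAux
      rw [ZMod.val_one, if_neg (by omega)]
      norm_num
    · unfold hAux
      have hval2 : (2 : ZMod k).val = 2 := by
        have h22 : ((2 : ℕ) : ZMod k) = (2 : ZMod k) := by push_cast; ring
        rw [← h22, ZMod.val_natCast, Nat.mod_eq_of_lt (by omega)]
      rw [hval2, if_neg (by omega)]
      norm_num
  · intro h hhom h0 h1 h2
    constructor
    · intro x y hxy
      by_cases hx : ∀ i, x i = 1 <;> by_cases hy : ∀ i, y i = 1
      · exfalso
        have hadj := hxy ⟨0, hn⟩
        rw [hx ⟨0, hn⟩, hy ⟨0, hn⟩] at hadj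
        rcases hadj with h' | h'
        · exact h1ne0 (by linear_combination -h')
        · exact h1ne0 (by linear_combination h')
      · rw [if_pos hx, if_neg hy]
        have hadj := hxy ⟨0, hn⟩
        rw [hx ⟨0, hn⟩] at hadj
        rcases hadj with h' | h'
        · have hy0 : y ⟨0, hn⟩ = 2 := by rw [h']; norm_num
          rw [hy0, h2]; decide
        · have hy0 : y ⟨0, hn⟩ = 0 := by rw [h']; ring
          rw [hy0, h0]; decide
      · rw [if_neg hx, if_pos hy]
        have hadj := hxy ⟨0, hn⟩
        rw [hy ⟨0, hn⟩] at hadj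
        rcases hadj with h' | h'
        · have hx0 : x ⟨0, hn⟩ = 0 := by linear_combination -h'
          rw [hx0, h0]; decide
        · have hx0 : x ⟨0, hn⟩ = 2 := by linear_combination -h'
          rw [hx0, h2]; decide
      · rw [if_neg hx, if_neg hy]
        exact hhom _ _ (hxy ⟨0, hn⟩)
    · intro i
      refine ⟨fun _ => 1, 2, ?_⟩
      have hall : ∀ j : Fin n, (fun _ : Fin n => (1 : ZMod k)) j = 1 := fun _ => rfl
      have hnot : ¬ ∀ j : Fin n,
          Function.update (fun _ : Fin n => (1 : ZMod k)) i 2 j = 1 := by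
        intro hc
        have := hc i
        rw [Function.update_self] at this
        exact h1ne2 this.symm
      show (if ∀ j : Fin n, (fun _ : Fin n => (1 : ZMod k)) j = 1 then (2 : ZMod 3)
          else h ((fun _ : Fin n => (1 : ZMod k)) ⟨0, hn⟩)) ≠ _
      rw [if_pos hall]
      show (2 : ZMod 3) ≠ (if ∀ j : Fin n,
          Function.update (fun _ : Fin n => (1 : ZMod k)) i 2 j = 1 then (2 : ZMod 3)
          else h (Function.update (fun _ : Fin n => (1 : ZMod k)) i 2 ⟨0, hn⟩))
      rw [if_neg hnot]
      by_cases hi : (⟨0, hn⟩ : Fin n) = i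
      · rw [hi, Function.update_self, h2]
        decide
      · rw [Function.update_of_ne hi, h1]
        decide
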